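/- The minimal number m of nodes for which there exist points ξ¹,…,ξᵐ ∈ [-1,1] and real weights λ₁,…,λₘ such that ∫ f² dμ = Σⱼ λⱼ f(ξʲ)² for all f in span{f1, f2}, equals 3. -/

import Mathlib

open MeasureTheory Set

set_option maxHeartbeats 1600000

noncomputable def f1 : ℝ → ℝ := fun x => if x < 0 then 0 else 1

noncomputable def f2 (a A B : ℝ) : ℝ → ℝ := fun x =>
  if x < 0 then a
  else if x < 1/4 then A
  else if x < 1/2 then -A
  else if x < 3/4 then B
  else -B

lemma piece_integrable {g : ℝ → ℝ} {s t c : ℝ} (hst : s ≤ t)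
    (hg : ∀ x ∈ Ioo s t, g x = c) : IntervalIntegrable g volume s t := by
  rw [intervalIntegrable_iff_integrableOn_Ioo_of_le hst]
  exact ((integrableOn_const_iff (C := c)).mpr (Or.inr (by simp))).congr_fun (fun x hx => (hg x hx).symm) measurableSet_Ioo

lemma piece_integral {g : ℝ → ℝ} {s t c : ℝ} (hst : s ≤ t)
    (hg : ∀ x ∈ Ioo s t, g x = c) : ∫ x in s..t, g x = (t - s) * c := by
  rw [intervalIntegral.integral_of_le hst, integral_Ioc_eq_integral_Ioo,
    setIntegral_congr_fun measurableSet_Ioo hg, setIntegral_const, Real.volume_real_Ioo,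
    smul_eq_mul, max_eq_left (by linarith)]

lemma vals (a A B : ℝ) (x : ℝ) :
    (f1 x = 0 ∧ f2 a A B x = a) ∨
    (f1 x = 1 ∧ (f2 a A B x = A ∨ f2 a A B x = -A ∨ f2 a A B x = B ∨ f2 a A B x = -B)) := by
  unfold f1 f2
  split_ifs <;> simp

lemma key_integral (a A B c1 c2 : ℝ) :
    ∫ x in (-1:ℝ)..1, (c1 * f1 x + c2 * f2 a A B x) ^ 2
      = c1 ^ 2 + c2 ^ 2 * (a ^ 2 + (A ^ 2 + B ^ 2) / 2) := by
  set g : ℝ → ℝ := fun x => (c1 * f1 x + c2 * f2 a A B x) ^ 2 with hgdef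
  have h1 : ∀ x ∈ Ioo (-1:ℝ) 0, g x = (c2 * a) ^ 2 := by
    intro x hx
    simp only [hgdef, f1, f2, if_pos hx.2]
    ring
  have h2 : ∀ x ∈ Ioo (0:ℝ) (1/4), g x = (c1 + c2 * A) ^ 2 := by
    intro x hx
    have hx0 : ¬ x < 0 := not_lt.2 hx.1.le
    simp only [hgdef, f1, f2, if_neg hx0, if_pos hx.2]
    ring
  have h3 : ∀ x ∈ Ioo (1/4:ℝ) (1/2), g x = (c1 - c2 * A) ^ 2 := by
    intro x hx
    have hx0 : ¬ x < 0 := by push_neg; linarith [hx.1]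
    have hx1 : ¬ x < 1/4 := not_lt.2 hx.1.le
    simp only [hgdef, f1, f2, if_neg hx0, if_neg hx1, if_pos hx.2]
    ring
  have h4 : ∀ x ∈ Ioo (1/2:ℝ) (3/4), g x = (c1 + c2 * B) ^ 2 := by
    intro x hx
    have hx0 : ¬ x < 0 := by push_neg; linarith [hx.1]
    have hx1 : ¬ x < 1/4 := by push_neg; linarith [hx.1]
    have hx2 : ¬ x < 1/2 := not_lt.2 hx.1.le
    simp only [hgdef, f1, f2, if_neg hx0, if_neg hx1, if_neg hx2, if_pos hx.2]
    ring
  have h5 : ∀ x ∈ Ioo (3/4:ℝ) 1, g x = (c1 - c2 * B) ^ 2 := by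
    intro x hx
    have hx0 : ¬ x < 0 := by push_neg; linarith [hx.1]
    have hx1 : ¬ x < 1/4 := by push_neg; linarith [hx.1]
    have hx2 : ¬ x < 1/2 := by push_neg; linarith [hx.1]
    have hx3 : ¬ x < 3/4 := not_lt.2 hx.1.le
    simp only [hgdef, f1, f2, if_neg hx0, if_neg hx1, if_neg hx2, if_neg hx3]
    ring
  have i1 := piece_integrable (by norm_num) h1
  have i2 := piece_integrable (by norm_num) h2
  have i3 := piece_integrable (by norm_num) h3
  have i4 := piece_integrable (by norm_num) h4
  have i5 := piece_integrable (by norm_num) h5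
  have split1 := intervalIntegral.integral_add_adjacent_intervals
    (i1) (i2.trans (i3.trans (i4.trans i5)))
  have split2 := intervalIntegral.integral_add_adjacent_intervals
    (i2) (i3.trans (i4.trans i5))
  have split3 := intervalIntegral.integral_add_adjacent_intervals (i3) (i4.trans i5)
  have split4 := intervalIntegral.integral_add_adjacent_intervals i4 i5
  rw [← split1, ← split2, ← split3, ← split4,
    piece_integral (by norm_num) h1, piece_integral (by norm_num) h2,
    piece_integral (by norm_num) h3, piece_integral (by norm_num) h4,
    piece_integral (by norm_num) h5]
  ring

theorem minimal_nodes_eq_three (a A B : ℝ) (ha : 0 < a) (hAB : B < A) (hB : 0 < B)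
    (hcond : A ^ 2 > 2 * a ^ 2 + B ^ 2) :
    IsLeast {m : ℕ | ∃ (ξ : Fin m → ℝ) (l : Fin m → ℝ),
      (∀ j, ξ j ∈ Icc (-1:ℝ) 1) ∧
      ∀ f ∈ Submodule.span ℝ ({f1, f2 a A B} : Set (ℝ → ℝ)),
        (∫ x in (-1:ℝ)..1, (f x) ^ 2) = ∑ j, l j * (f (ξ j)) ^ 2} 3 := by
  have hf1mem : f1 ∈ Submodule.span ℝ ({f1, f2 a A B} : Set (ℝ → ℝ)) :=
    Submodule.subset_span (by simp)
  have hf2mem : f2 a A B ∈ Submodule.span ℝ ({f1, f2 a A B} : Set (ℝ → ℝ)) :=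
    Submodule.subset_span (by simp)
  constructor
  · -- membership: 3 nodes suffice
    refine ⟨![(-1), 0, 1/4], ![(2*a^2 + B^2 - A^2)/(2*a^2), 1/2, 1/2], ?_, ?_⟩
    · intro j
      fin_cases j <;> constructor <;> norm_num
    · intro f hf
      rw [Submodule.mem_span_pair] at hf
      obtain ⟨c1, c2, hc⟩ := hf
      have hfx : ∀ x, f x = c1 * f1 x + c2 * f2 a A B x := by
        intro x
        rw [← hc]
        simp
      have hint : ∫ x in (-1:ℝ)..1, (f x) ^ 2
          = c1 ^ 2 + c2 ^ 2 * (a ^ 2 + (A ^ 2 + B ^ 2) / 2) := by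
        rw [← key_integral a A B c1 c2]
        apply intervalIntegral.integral_congr
        intro x _
        simp only [hfx]
      rw [hint, Fin.sum_univ_three]
      simp only [Matrix.cons_val_zero, Matrix.cons_val_one, Matrix.head_cons,
        Matrix.cons_val_two, Matrix.tail_cons]
      have e1 : f1 (-1) = 0 ∧ f2 a A B (-1) = a := by unfold f1 f2; norm_num
      have e2 : f1 0 = 1 ∧ f2 a A B 0 = A := by unfold f1 f2; norm_num
      have e3 : f1 (1/4) = 1 ∧ f2 a A B (1/4) = -A := by unfold f1 f2; norm_num
      rw [hfx, hfx, hfx, e1.1, e1.2, e2.1, e2.2, e3.1, e3.2]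
      field_simp
      ring
  · -- lower bound
    rintro m ⟨ξ, l, hξ, hint⟩
    by_contra hm
    push_neg at hm
    have hE1 : (1:ℝ) = ∑ j, l j * (f1 (ξ j)) ^ 2 := by
      have h := hint f1 hf1mem
      have h2 := key_integral a A B 1 0
      simp only [one_mul, zero_mul, add_zero] at h2
      rw [h2] at h
      linarith [h]
    have hE2 : a ^ 2 + (A ^ 2 + B ^ 2) / 2 = ∑ j, l j * (f2 a A B (ξ j)) ^ 2 := by
      have h := hint (f2 a A B) hf2mem
      have h2 := key_integral a A B 0 1
      simp only [one_mul, zero_mul, zero_add] at h2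
      rw [h2] at h
      linarith [h]
    have hE3 : 1 + (a ^ 2 + (A ^ 2 + B ^ 2) / 2)
        = ∑ j, l j * (f1 (ξ j) + f2 a A B (ξ j)) ^ 2 := by
      have h := hint (f1 + f2 a A B) (Submodule.add_mem _ hf1mem hf2mem)
      have h2 := key_integral a A B 1 1
      simp only [one_mul, Pi.add_apply] at h h2
      rw [h2] at h
      linarith [h]
    have cross : ∑ j, l j * (f1 (ξ j) * f2 a A B (ξ j)) = 0 := by
      have hexp : ∀ j ∈ Finset.univ, l j * (f1 (ξ j) + f2 a A B (ξ j)) ^ 2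
          = (l j * (f1 (ξ j)) ^ 2 + l j * (f2 a A B (ξ j)) ^ 2)
            + 2 * (l j * (f1 (ξ j) * f2 a A B (ξ j))) := fun j _ => by ring
      rw [Finset.sum_congr rfl hexp, Finset.sum_add_distrib, Finset.sum_add_distrib,
        ← Finset.mul_sum] at hE3
      linarith [hE1, hE2, hE3]
    interval_cases m
    · -- m = 0
      norm_num [Finset.sum_empty] at hE1
    · -- m = 1
      simp only [Fin.sum_univ_one] at hE1 hE2 cross
      rcases vals a A B (ξ 0) with ⟨hu, hv⟩ | ⟨hu, hv⟩
      · rw [hu] at hE1; norm_num at hE1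
      · rw [hu] at hE1 cross
        have hz : f2 a A B (ξ 0) = 0 := by
          linear_combination cross + f2 a A B (ξ 0) * hE1
        rcases hv with h|h|h|h <;> rw [h] at hz <;> linarith
    · -- m = 2
      simp only [Fin.sum_univ_two] at hE1 hE2 cross
      rcases vals a A B (ξ 0) with ⟨hu0, hv0⟩ | ⟨hu0, hv0⟩ <;>
        rcases vals a A B (ξ 1) with ⟨hu1, hv1⟩ | ⟨hu1, hv1⟩
      · rw [hu0, hu1] at hE1; norm_num at hE1
      · rw [hu0, hu1] at hE1 cross
        have hz : f2 a A B (ξ 1) = 0 := by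
          linear_combination cross + f2 a A B (ξ 1) * hE1
        rcases hv1 with h|h|h|h <;> rw [h] at hz <;> linarith
      · rw [hu0, hu1] at hE1 cross
        have hz : f2 a A B (ξ 0) = 0 := by
          linear_combination cross + f2 a A B (ξ 0) * hE1
        rcases hv0 with h|h|h|h <;> rw [h] at hz <;> linarith
      · rw [hu0, hu1] at hE1 cross
        have key : a ^ 2 + (A ^ 2 + B ^ 2) / 2
            + f2 a A B (ξ 0) * f2 a A B (ξ 1) = 0 := by
          linear_combination hE2 + (f2 a A B (ξ 0) * f2 a A B (ξ 1)) * hE1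
            + (f2 a A B (ξ 0) + f2 a A B (ξ 1)) * cross
        have hA : 0 < A := hB.trans hAB
        rcases hv0 with h0|h0|h0|h0 <;> rcases hv1 with h1|h1|h1|h1 <;>
          rw [h0, h1] at key <;> ring_nf at key <;>
          nlinarith [key, hcond, sq_nonneg (A - B), mul_pos ha ha, mul_pos hA hA,
            mul_pos hB hB, mul_pos hA hB]
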